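/- Let L ⊆ ℝ^N be a linear subspace, y ∈ ℝ^N, c̃ ∈ ℝ^N, c0 ∈ ℝ. Let π_L be the orthogonal projection onto L. If c0 + ⟨c̃, π_L(y)⟩ ≠ 0, then the function α̃ ↦ ‖y − α̃‖²/(c0 + ⟨c̃, α̃⟩)² restricted to {α̃ ∈ L : c0 + ⟨c̃, α̃⟩ ≠ 0} has the unique minimizer α̃* = π_L(y) + (‖y − π_L(y)‖²/(c0 + ⟨c̃, π_L(y)⟩)) · π_L(c̃). -/

import Mathlib

open scoped RealInnerProductSpace

lemma stmt_13_aux (d t s u nv nw : ℝ) (hs : s ≠ 0) (hd0 : 0 ≤ d) (ht0 : 0 ≤ t)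
    (hnv0 : 0 ≤ nv) (hnw0 : 0 ≤ nw) (cauchy : u ^ 2 ≤ t * nv)
    (h2 : s ^ 2 * nw = s ^ 2 * nv - 2 * d * s * u + d ^ 2 * t) (hsu : s + u ≠ 0) :
    (d + (d / s) ^ 2 * t) / (s + d / s * t) ^ 2 ≤ (d + nv) / (s + u) ^ 2 ∧
      ((d + nv) / (s + u) ^ 2 = (d + (d / s) ^ 2 * t) / (s + d / s * t) ^ 2 → nw = 0) := by
  have hs2 : 0 < s ^ 2 := lt_of_le_of_ne (sq_nonneg s) (Ne.symm (pow_ne_zero 2 hs))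
  have hsd : 0 < s ^ 2 + d * t := by nlinarith [mul_nonneg hd0 ht0]
  have hsu2 : 0 < (s + u) ^ 2 := lt_of_le_of_ne (sq_nonneg _) (Ne.symm (pow_ne_zero 2 hsu))
  have hden' : s + d / s * t = (s ^ 2 + d * t) / s := by field_simp
  have hdne : s + d / s * t ≠ 0 := by
    rw [hden']; exact div_ne_zero (ne_of_gt hsd) hs
  have hstar : (d + (d / s) ^ 2 * t) / (s + d / s * t) ^ 2 = d / (s ^ 2 + d * t) := by
    rw [div_eq_div_iff (pow_ne_zero 2 hdne) (ne_of_gt hsd)]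
    field_simp
  constructor
  · rw [hstar, div_le_div_iff₀ hsd hsu2]
    nlinarith [h2, mul_nonneg hd0 (sub_nonneg.2 cauchy), mul_nonneg (le_of_lt hs2) hnw0]
  · intro heq
    rw [hstar] at heq
    have hcross : (d + nv) * (s ^ 2 + d * t) = d * (s + u) ^ 2 := by
      have := (div_eq_div_iff (ne_of_gt hsu2) (ne_of_gt hsd)).1 heq
      linarith
    have hle : s ^ 2 * nw ≤ 0 := by
      nlinarith [hcross, h2, mul_nonneg hd0 (sub_nonneg.2 cauchy)]
    rcases hnw0.lt_or_eq with h' | h'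
    · exfalso; nlinarith [mul_pos hs2 h']
    · exact h'.symm

set_option maxHeartbeats 1000000 in
theorem stmt_13 (N : ℕ) (L : Submodule ℝ (EuclideanSpace ℝ (Fin N)))
    (y ct : EuclideanSpace ℝ (Fin N)) (c0 : ℝ)
    (h : c0 + ⟪ct, (L.orthogonalProjection y : EuclideanSpace ℝ (Fin N))⟫ ≠ 0) :
    let pY : EuclideanSpace ℝ (Fin N) := L.orthogonalProjection y
    let astar : EuclideanSpace ℝ (Fin N) :=
      pY + (‖y - pY‖ ^ 2 / (c0 + ⟪ct, pY⟫)) •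
        (L.orthogonalProjection ct : EuclideanSpace ℝ (Fin N))
    astar ∈ L ∧ c0 + ⟪ct, astar⟫ ≠ 0 ∧
      ∀ α ∈ L, c0 + ⟪ct, α⟫ ≠ 0 →
        ‖y - astar‖ ^ 2 / (c0 + ⟪ct, astar⟫) ^ 2 ≤ ‖y - α‖ ^ 2 / (c0 + ⟪ct, α⟫) ^ 2 ∧
        (‖y - α‖ ^ 2 / (c0 + ⟪ct, α⟫) ^ 2 =
            ‖y - astar‖ ^ 2 / (c0 + ⟪ct, astar⟫) ^ 2 → α = astar) := by
  intro pY astar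
  have hp : pY ∈ L := Submodule.coe_mem _
  set q : EuclideanSpace ℝ (Fin N) :=
    (L.orthogonalProjection ct : EuclideanSpace ℝ (Fin N)) with hq_def
  have hq : q ∈ L := Submodule.coe_mem _
  have hyo : ∀ z ∈ L, ⟪y - pY, z⟫ = 0 := fun z hz =>
    (Submodule.mem_orthogonal' L _).1 (Submodule.sub_starProjection_mem_orthogonal (K := L) y) z hz
  have hco : ∀ z ∈ L, ⟪ct - q, z⟫ = 0 := fun z hz =>
    (Submodule.mem_orthogonal' L _).1 (Submodule.sub_starProjection_mem_orthogonal (K := L) ct) z hz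
  have hct : ∀ z ∈ L, ⟪ct, z⟫ = ⟪q, z⟫ := by
    intro z hz
    have := hco z hz
    rw [inner_sub_left] at this
    linarith
  set d : ℝ := ‖y - pY‖ ^ 2 with hd_def
  set s : ℝ := c0 + ⟪ct, pY⟫ with hs_def
  set t : ℝ := ‖q‖ ^ 2 with ht_def
  have hs : s ≠ 0 := h
  have hd0 : 0 ≤ d := sq_nonneg _
  have ht0 : 0 ≤ t := sq_nonneg _
  have hs2 : 0 < s ^ 2 := lt_of_le_of_ne (sq_nonneg s) (Ne.symm (pow_ne_zero 2 hs))
  have hsd : 0 < s ^ 2 + d * t := by nlinarith [mul_nonneg hd0 ht0]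
  have hctq : ⟪ct, q⟫ = t := by
    rw [hct q hq, real_inner_self_eq_norm_sq]
  have hyq : ⟪y - pY, q⟫ = 0 := hyo q hq
  have hastar : astar = pY + (d / s) • q := rfl
  have hdenstar : c0 + ⟪ct, astar⟫ = s + d / s * t := by
    rw [hastar, inner_add_right, real_inner_smul_right, hctq]
    ring
  have hnumstar : ‖y - astar‖ ^ 2 = d + (d / s) ^ 2 * t := by
    have h1 : y - astar = (y - pY) - (d / s) • q := by rw [hastar]; abel
    rw [h1, norm_sub_sq_real, real_inner_smul_right, hyq, norm_smul, mul_pow,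
      Real.norm_eq_abs, sq_abs]
    ring
  have hdenstar_ne : c0 + ⟪ct, astar⟫ ≠ 0 := by
    rw [hdenstar]
    intro heq
    have hmul : s * (s + d / s * t) = s ^ 2 + d * t := by field_simp
    rw [heq, mul_zero] at hmul
    linarith
  refine ⟨Submodule.add_mem L hp (Submodule.smul_mem L _ hq), hdenstar_ne, ?_⟩
  intro α hα hα0
  set v : EuclideanSpace ℝ (Fin N) := α - pY with hv_def
  have hv : v ∈ L := Submodule.sub_mem L hα hp
  set u : ℝ := ⟪q, v⟫ with hu_def
  set nv : ℝ := ‖v‖ ^ 2 with hnv_def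
  have hnv0 : 0 ≤ nv := sq_nonneg _
  have hαeq : α = pY + v := by rw [hv_def]; abel
  have hnum : ‖y - α‖ ^ 2 = d + nv := by
    have h1 : y - α = (y - pY) - v := by rw [hαeq]; abel
    rw [h1, norm_sub_sq_real, hyo v hv]
    ring
  have hden : c0 + ⟪ct, α⟫ = s + u := by
    rw [hαeq, inner_add_right, hct v hv]
    ring
  have hsu : s + u ≠ 0 := by rw [← hden]; exact hα0
  have cauchy : u ^ 2 ≤ t * nv := by
    have hcs := real_inner_mul_inner_self_le q v
    rw [real_inner_self_eq_norm_sq, real_inner_self_eq_norm_sq] at hcs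
    calc u ^ 2 = ⟪q, v⟫ * ⟪q, v⟫ := by rw [hu_def]; ring
    _ ≤ ‖q‖ ^ 2 * ‖v‖ ^ 2 := by nlinarith [hcs]
    _ = t * nv := rfl
  set w : EuclideanSpace ℝ (Fin N) := v - (d / s) • q with hw_def
  have hvq : ⟪v, q⟫ = u := by rw [hu_def, real_inner_comm]
  have hw : ‖w‖ ^ 2 = nv - 2 * (d / s) * u + (d / s) ^ 2 * t := by
    rw [hw_def, norm_sub_sq_real, real_inner_smul_right, norm_smul, mul_pow,
      Real.norm_eq_abs, sq_abs, hvq]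
    ring
  have hw0 : 0 ≤ ‖w‖ ^ 2 := sq_nonneg _
  have h2 : s ^ 2 * ‖w‖ ^ 2 = s ^ 2 * nv - 2 * d * s * u + d ^ 2 * t := by
    rw [hw]
    field_simp
  obtain ⟨hle, heqc⟩ := stmt_13_aux d t s u nv (‖w‖ ^ 2) hs hd0 ht0 hnv0 hw0 cauchy h2 hsu
  constructor
  · rw [hnumstar, hdenstar, hnum, hden]
    exact hle
  · intro heq
    rw [hnumstar, hdenstar, hnum, hden] at heq
    have hww : ‖w‖ ^ 2 = 0 := heqc heq
    have hwz : w = 0 := by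
      have hn : ‖w‖ = 0 := by nlinarith [norm_nonneg w]
      exact norm_eq_zero.1 hn
    have hveq : v = (d / s) • q := sub_eq_zero.1 hwz
    rw [hαeq, hveq, hastar]
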